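/- Let n ≥ 2 and c ∈ ℝ. Consider the two curve-germs in ℝ^{2n} (coordinates (p₁,q₁,p₂,q₂,…,pₙ,qₙ), all unlisted coordinates equal to 0): B₁(t) = (t³, (c/3)t⁶, 0, −t², 0, …, 0) and B₂(t) = (t³, 0, −t², 0, 0, …, 0) (the class (T₇)⁴). Then Lt(B₁,B₂) = 2, while Lt(B₁) = ∞ and Lt(B₂) = ∞ (each branch is contained in a smooth Lagrangian submanifold, but the two branches are not contained in a common one). -/

import Mathlib

noncomputable section

/-- The order of vanishing at `0` of a function `h : ℝ → ℝ`: the least `k ≥ 1` such that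
the `k`-th derivative of `h` at `0` is nonzero, and `∞` if all derivatives vanish at `0`. -/
def vanishOrder (h : ℝ → ℝ) : ℕ∞ :=
  sInf {k : ℕ∞ | ∃ m : ℕ, k = m ∧ 1 ≤ m ∧ iteratedDeriv m h 0 ≠ 0}

/-- The standard symplectic form `ω = ∑ dpᵢ ∧ dqᵢ` on `ℝ^{2n}`, where the coordinates are
ordered as `(p₁, q₁, …, pₙ, qₙ)` (so `pᵢ` has index `2(i-1)` and `qᵢ` has index `2(i-1)+1`). -/
def stdSymp (n : ℕ) (u v : Fin (2 * n) → ℝ) : ℝ :=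
  ∑ i : Fin n,
    (u ⟨2 * i.val, by have := i.isLt; omega⟩ * v ⟨2 * i.val + 1, by have := i.isLt; omega⟩ -
     u ⟨2 * i.val + 1, by have := i.isLt; omega⟩ * v ⟨2 * i.val, by have := i.isLt; omega⟩)

/-- A germ at `0` of a smooth Lagrangian submanifold of `(ℝ^{2n}, ω)`, given by `n` smooth
functions `H₁, …, Hₙ` vanishing at `0`, whose differentials are linearly independent at the
points of `{H₁ = ⋯ = Hₙ = 0}` near `0`, and such that `ω` vanishes on `ker DH(x)` at every
such point. -/
structure LagrangianGerm (n : ℕ) : Type where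
  H : Fin n → (Fin (2 * n) → ℝ) → ℝ
  smooth : ∀ i, ContDiff ℝ (⊤ : ℕ∞) (H i)
  zero_at_zero : ∀ i, H i 0 = 0
  lagrangian : ∃ U : Set (Fin (2 * n) → ℝ), IsOpen U ∧ 0 ∈ U ∧
    ∀ x ∈ U, (∀ i, H i x = 0) →
      LinearIndependent ℝ (fun i => fderiv ℝ (H i) x) ∧
      ∀ u v : Fin (2 * n) → ℝ, (∀ i, fderiv ℝ (H i) x u = 0) →
        (∀ i, fderiv ℝ (H i) x v = 0) → stdSymp n u v = 0

/-- The tangency order `t(f, L)` of a curve `f` to a Lagrangian submanifold-germ `L`: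
the minimum over `i` of the order of vanishing at `0` of `Hᵢ ∘ f`. -/
def tOrd {n : ℕ} (f : ℝ → Fin (2 * n) → ℝ) (L : LagrangianGerm n) : ℕ∞ :=
  ⨅ i : Fin n, vanishOrder (fun t => L.H i (f t))

/-- The Lagrangian tangency order `Lt(f)` of a curve `f`. -/
def Lt1 {n : ℕ} (f : ℝ → Fin (2 * n) → ℝ) : ℕ∞ :=
  ⨆ L : LagrangianGerm n, tOrd f L

/-- The Lagrangian tangency order `Lt(f, g)` of a multi-germ of two curves. -/
def Lt2 {n : ℕ} (f g : ℝ → Fin (2 * n) → ℝ) : ℕ∞ :=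
  ⨆ L : LagrangianGerm n, min (tOrd f L) (tOrd g L)

/-- The Lagrangian tangency order `Lt(f, g, h)` of a multi-germ of three curves. -/
def Lt3 {n : ℕ} (f g h : ℝ → Fin (2 * n) → ℝ) : ℕ∞ :=
  ⨆ L : LagrangianGerm n, min (tOrd f L) (min (tOrd g L) (tOrd h L))

/-! ### Auxiliary lemmas -/

lemma iteratedDeriv_zero_fun' (m : ℕ) : iteratedDeriv m (fun _ : ℝ => (0:ℝ)) = fun _ => 0 := by
  induction m with
  | zero => simp [iteratedDeriv_zero]
  | succ k ih =>
    rw [iteratedDeriv_succ', show deriv (fun _ : ℝ => (0:ℝ)) = fun _ => 0 by funext t; simp]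
    exact ih

lemma vanishOrder_zero_fun : vanishOrder (fun _ => 0) = ⊤ := by
  rw [vanishOrder]
  refine (congrArg sInf ?_).trans sInf_empty
  ext k; simp only [Set.mem_setOf_eq, Set.mem_empty_iff_false, iff_false]
  rintro ⟨m, rfl, hm, hne⟩
  exact hne (by rw [iteratedDeriv_zero_fun'])

lemma two_le_vanishOrder (h : ℝ → ℝ) (h1 : deriv h 0 = 0) : 2 ≤ vanishOrder h := by
  apply le_sInf
  rintro k ⟨m, rfl, hm, hne⟩
  by_contra hlt
  push_neg at hlt
  have hm2 : m < 2 := by exact_mod_cast hlt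
  have : m = 1 := by omega
  subst this
  exact hne (by rw [iteratedDeriv_one]; exact h1)

lemma iteratedDeriv2_eq_zero (h : ℝ → ℝ) (hgt : 2 < vanishOrder h) :
    iteratedDeriv 2 h 0 = 0 := by
  by_contra hne
  have : vanishOrder h ≤ 2 := sInf_le ⟨2, by norm_num, by norm_num, hne⟩
  exact absurd this (not_le.mpr hgt)

lemma key_second_deriv {E : Type*} [NormedAddCommGroup E] [NormedSpace ℝ E]
    (h : E → ℝ) (hh : ContDiff ℝ (⊤ : ℕ∞) h) (a : ℝ) (v₀ v₁ w : E) :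
    iteratedDeriv 2 (fun t : ℝ => h (t ^ 3 • v₀ + (a * t ^ 6) • v₁ + (-(t ^ 2)) • w)) 0
      = -2 * fderiv ℝ h 0 w := by
  set f : ℝ → E := fun t => t ^ 3 • v₀ + (a * t ^ 6) • v₁ + (-(t ^ 2)) • w with hf_def
  set d : ℝ → E := fun t => (3 * t ^ 2) • v₀ + (a * (6 * t ^ 5)) • v₁ + (-(2 * t)) • w with hd_def
  have hf : ∀ t, HasDerivAt f (d t) t := by
    intro t
    have h1 : HasDerivAt (fun t : ℝ => t ^ 3) (3 * t ^ 2) t := by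
      simpa using hasDerivAt_pow 3 t
    have h2 : HasDerivAt (fun t : ℝ => a * t ^ 6) (a * (6 * t ^ 5)) t := by
      simpa using (hasDerivAt_pow 6 t).const_mul a
    have h3 : HasDerivAt (fun t : ℝ => -(t ^ 2)) (-(2 * t)) t := by
      simpa using (hasDerivAt_pow 2 t).fun_neg
    exact ((h1.smul_const v₀).add (h2.smul_const v₁)).add (h3.smul_const w)
  have hdiff : Differentiable ℝ h := hh.differentiable (by simp)
  have hg : ∀ t, HasDerivAt (fun s => h (f s)) (fderiv ℝ h (f t) (d t)) t :=
    fun t => (hdiff (f t)).hasFDerivAt.comp_hasDerivAt t (hf t)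
  have hderiv1 : deriv (fun s => h (f s)) = fun t =>
      (3 * t ^ 2) * (fderiv ℝ h (f t) v₀) + (a * (6 * t ^ 5)) * (fderiv ℝ h (f t) v₁)
        + (-(2 * t)) * (fderiv ℝ h (f t) w) := by
    funext t
    rw [(hg t).deriv, hd_def]
    simp [map_add, map_smul, smul_eq_mul]
  have hfC : ContDiff ℝ (⊤ : ℕ∞) f := by
    apply ContDiff.add
    apply ContDiff.add
    · exact (contDiff_id.pow 3).smul contDiff_const
    · exact ((contDiff_const.mul (contDiff_id.pow 6))).smul contDiff_const
    · exact ((contDiff_id.pow 2).neg).smul contDiff_const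
  have hF : ContDiff ℝ (⊤ : ℕ∞) (fderiv ℝ h) :=
    hh.fderiv_right (by exact_mod_cast (le_top : (⊤ + 1 : ℕ∞) ≤ ⊤))
  have hψ : ∀ v : E, HasDerivAt (fun t => fderiv ℝ h (f t) v)
      (deriv (fun t => fderiv ℝ h (f t) v) 0) 0 := by
    intro v
    have : ContDiff ℝ (⊤ : ℕ∞) (fun t => fderiv ℝ h (f t) v) :=
      (hF.comp hfC).clm_apply contDiff_const
    exact (this.differentiable (by simp) 0).hasDerivAt
  have hfinal : HasDerivAt (deriv (fun s => h (f s))) (-2 * fderiv ℝ h 0 w) 0 := by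
    rw [hderiv1]
    have A : HasDerivAt (fun t : ℝ => 3 * t ^ 2) 0 0 := by
      simpa using ((hasDerivAt_pow 2 (0:ℝ)).const_mul 3)
    have B : HasDerivAt (fun t : ℝ => a * (6 * t ^ 5)) 0 0 := by
      simpa using (((hasDerivAt_pow 5 (0:ℝ)).const_mul 6).const_mul a)
    have C : HasDerivAt (fun t : ℝ => -(2 * t)) (-2) 0 := by
      simpa using ((hasDerivAt_id (0:ℝ)).const_mul 2).fun_neg
    have hsum := ((A.fun_mul (hψ v₀)).fun_add (B.fun_mul (hψ v₁))).fun_add (C.fun_mul (hψ w))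
    have hf0 : f 0 = 0 := by simp [hf_def]
    simpa [hf0] using hsum
  rw [iteratedDeriv_succ, iteratedDeriv_one, hfinal.deriv]

/-! ### Coordinate projections -/

abbrev pr {N : ℕ} (j : Fin N) : (Fin N → ℝ) →L[ℝ] ℝ :=
  ContinuousLinearMap.proj (R := ℝ) (φ := fun _ : Fin N => ℝ) j

lemma fderiv_coord {N : ℕ} (j : Fin N) (x : Fin N → ℝ) :
    fderiv ℝ (fun x : Fin N → ℝ => x j) x = pr j := by
  rw [show (fun x : Fin N → ℝ => x j) = ⇑(pr j) from rfl]
  exact ContinuousLinearMap.fderiv _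
def sig (n : ℕ) (hn : 2 ≤ n) (i : Fin n) : Fin (2 * n) :=
  ⟨if i.val = 0 then 1 else if i.val = 1 then 3 else 2 * i.val,
   by have := i.isLt; split_ifs <;> omega⟩

lemma sig_inj (n : ℕ) (hn : 2 ≤ n) : Function.Injective (sig n hn) := by
  intro i j h
  have h' : (sig n hn i).val = (sig n hn j).val := congrArg Fin.val h
  simp only [sig] at h'
  ext
  split_ifs at h' <;> omega

lemma li_proj {N n : ℕ} (σ : Fin n → Fin N) (hσ : Function.Injective σ) :
    LinearIndependent ℝ (fun i => (pr (σ i))) := by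
  rw [Fintype.linearIndependent_iff]
  intro g hg i
  have h2 := congrArg (fun T : (Fin N → ℝ) →L[ℝ] ℝ => T (Pi.single (σ i) 1)) hg
  simp only [ContinuousLinearMap.coe_sum', Finset.sum_apply,
    ContinuousLinearMap.smul_apply, ContinuousLinearMap.proj_apply,
    ContinuousLinearMap.zero_apply, smul_eq_mul, Pi.single_apply] at h2
  rw [Finset.sum_eq_single i] at h2
  · simpa using h2
  · intro b _ hb
    rw [if_neg (fun hc => hb (hσ hc)), mul_zero]
  · simp

def Lgerm2 (n : ℕ) (hn : 2 ≤ n) : LagrangianGerm n where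
  H := fun i x => x (sig n hn i)
  smooth := fun i => (pr (sig n hn i)).contDiff
  zero_at_zero := fun i => rfl
  lagrangian := by
    refine ⟨Set.univ, isOpen_univ, Set.mem_univ _, fun x _ _ => ⟨?_, ?_⟩⟩
    · have : (fun i => fderiv ℝ (fun x : Fin (2*n) → ℝ => x (sig n hn i)) x)
          = fun i => pr (sig n hn i) := by
        funext i; exact fderiv_coord _ _
      rw [this]
      exact li_proj _ (sig_inj n hn)
    · intro u v hu hv
      simp only [fderiv_coord, ContinuousLinearMap.proj_apply] at hu hv
      rw [stdSymp]
      apply Finset.sum_eq_zero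
      intro i _
      rcases Nat.lt_or_ge i.val 2 with hi | hi
      · rcases Nat.lt_or_ge i.val 1 with hi0 | hi1
        · -- i.val = 0 : indices 0,1 ; u 1 = 0 (sig 0 = 1), v 1 = 0
          have h0 : i.val = 0 := by omega
          have e1 : (⟨2 * i.val + 1, by have := i.isLt; omega⟩ : Fin (2*n))
              = sig n hn ⟨0, by omega⟩ := by
            simp [sig, Fin.ext_iff, h0]
          rw [e1, hu ⟨0, by omega⟩, hv ⟨0, by omega⟩]
          ring
        · -- i.val = 1 : indices 2,3 ; u 3 = 0 (sig 1 = 3), v 3 = 0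
          have h1 : i.val = 1 := by omega
          have e3 : (⟨2 * i.val + 1, by have := i.isLt; omega⟩ : Fin (2*n))
              = sig n hn ⟨1, by omega⟩ := by
            simp [sig, Fin.ext_iff, h1]
          rw [e3, hu ⟨1, by omega⟩, hv ⟨1, by omega⟩]
          ring
      · -- i.val ≥ 2 : u (2i) = 0 = v (2i) since sig i = 2i
        have e2i : (⟨2 * i.val, by have := i.isLt; omega⟩ : Fin (2*n))
            = sig n hn i := by
          simp only [sig, Fin.ext_iff]
          split_ifs <;> omega
        rw [e2i, hu i, hv i]
        ring
def H1 (n : ℕ) (hn : 2 ≤ n) (c : ℝ) (i : Fin n) (x : Fin (2 * n) → ℝ) : ℝ :=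
  if i.val = 0 then x ⟨1, by omega⟩ - (c/3) * (x ⟨0, by omega⟩)^2
  else x ⟨2 * i.val, by have := i.isLt; omega⟩

lemma H1_eq0 (n : ℕ) (hn : 2 ≤ n) (c : ℝ) (i : Fin n) (hi : i.val = 0) :
    H1 n hn c i = fun x => x ⟨1, by omega⟩ - (c/3) * (x ⟨0, by omega⟩)^2 := by
  funext x; rw [H1, if_pos hi]

lemma H1_eq1 (n : ℕ) (hn : 2 ≤ n) (c : ℝ) (i : Fin n) (hi : i.val ≠ 0) :
    H1 n hn c i = fun x => x ⟨2 * i.val, by have := i.isLt; omega⟩ := by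
  funext x; rw [H1, if_neg hi]

lemma fderiv_H1_0 (n : ℕ) (hn : 2 ≤ n) (c : ℝ) (i : Fin n) (hi : i.val = 0)
    (x : Fin (2 * n) → ℝ) :
    fderiv ℝ (H1 n hn c i) x
      = pr ⟨1, by omega⟩ - (c/3) • ((x ⟨0, by omega⟩) • pr ⟨0, by omega⟩
          + (x ⟨0, by omega⟩) • pr ⟨0, by omega⟩) := by
  rw [H1_eq0 n hn c i hi]
  have h0 : HasFDerivAt (fun y : Fin (2*n) → ℝ => y ⟨0, by omega⟩)
      (pr ⟨0, by omega⟩) x := (pr _).hasFDerivAt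
  have h1 : HasFDerivAt (fun y : Fin (2*n) → ℝ => y ⟨1, by omega⟩)
      (pr ⟨1, by omega⟩) x := (pr _).hasFDerivAt
  have hsq : HasFDerivAt (fun y : Fin (2*n) → ℝ => (y ⟨0, by omega⟩)^2)
      ((x ⟨0, by omega⟩) • pr ⟨0, by omega⟩ + (x ⟨0, by omega⟩) • pr ⟨0, by omega⟩) x := by
    have := h0.fun_mul h0
    simpa [sq] using this
  exact (h1.sub (hsq.const_mul (c/3))).fderiv

lemma fderiv_H1_1 (n : ℕ) (hn : 2 ≤ n) (c : ℝ) (i : Fin n) (hi : i.val ≠ 0)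
    (x : Fin (2 * n) → ℝ) :
    fderiv ℝ (H1 n hn c i) x = pr ⟨2 * i.val, by have := i.isLt; omega⟩ := by
  rw [H1_eq1 n hn c i hi]
  exact fderiv_coord _ _

def Lgerm1 (n : ℕ) (hn : 2 ≤ n) (c : ℝ) : LagrangianGerm n where
  H := H1 n hn c
  smooth := by
    intro i
    by_cases hi : i.val = 0
    · rw [H1_eq0 n hn c i hi]
      exact ((pr ⟨1, by omega⟩).contDiff.sub
        (contDiff_const.mul ((pr ⟨0, by omega⟩).contDiff.pow 2)))
    · rw [H1_eq1 n hn c i hi]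
      exact (pr _).contDiff
  zero_at_zero := by intro i; rw [H1]; split_ifs <;> simp
  lagrangian := by
    refine ⟨Set.univ, isOpen_univ, Set.mem_univ _, fun x _ _ => ?_⟩
    constructor
    · rw [Fintype.linearIndependent_iff]
      intro g hg i
      by_cases hi : i.val = 0
      · have h2 := congrArg (fun T : (Fin (2*n) → ℝ) →L[ℝ] ℝ =>
          T (Pi.single (⟨1, by omega⟩ : Fin (2*n)) 1)) hg
        simp only [ContinuousLinearMap.coe_sum', Finset.sum_apply,
          ContinuousLinearMap.smul_apply, ContinuousLinearMap.zero_apply,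
          smul_eq_mul] at h2
        rw [Finset.sum_eq_single i] at h2
        · rw [fderiv_H1_0 n hn c i hi] at h2
          simp only [ContinuousLinearMap.sub_apply, ContinuousLinearMap.add_apply,
            ContinuousLinearMap.smul_apply, ContinuousLinearMap.proj_apply,
            smul_eq_mul, Pi.single_apply] at h2
          norm_num [Fin.mk.injEq] at h2
          exact h2
        · intro b _ hb
          have hb0 : b.val ≠ 0 := fun hc => hb (Fin.ext (by omega))
          rw [fderiv_H1_1 n hn c b hb0]
          simp only [ContinuousLinearMap.proj_apply, Pi.single_apply]
          rw [if_neg (by simp only [ne_eq, Fin.mk.injEq]; omega), mul_zero]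
        · simp
      · have h2 := congrArg (fun T : (Fin (2*n) → ℝ) →L[ℝ] ℝ =>
          T (Pi.single (⟨2 * i.val, by have := i.isLt; omega⟩ : Fin (2*n)) 1)) hg
        simp only [ContinuousLinearMap.coe_sum', Finset.sum_apply,
          ContinuousLinearMap.smul_apply, ContinuousLinearMap.zero_apply,
          smul_eq_mul] at h2
        rw [Finset.sum_eq_single i] at h2
        · rw [fderiv_H1_1 n hn c i hi] at h2
          simp only [ContinuousLinearMap.proj_apply, Pi.single_apply] at h2
          simpa using h2
        · intro b _ hb
          by_cases hb0 : b.val = 0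
          · rw [fderiv_H1_0 n hn c b hb0]
            simp only [ContinuousLinearMap.sub_apply, ContinuousLinearMap.add_apply,
              ContinuousLinearMap.smul_apply, ContinuousLinearMap.proj_apply,
              smul_eq_mul, Pi.single_apply]
            rw [if_neg (by simp only [ne_eq, Fin.mk.injEq]; omega),
              if_neg (by simp only [ne_eq, Fin.mk.injEq]; omega)]
            ring
          · rw [fderiv_H1_1 n hn c b hb0]
            simp only [ContinuousLinearMap.proj_apply, Pi.single_apply]
            have hbv : b.val ≠ i.val := fun hc => hb (Fin.ext hc)
            rw [if_neg (by simp only [ne_eq, Fin.mk.injEq]; omega), mul_zero]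
        · simp
    · intro u v hu hv
      have hu0 := hu ⟨0, by omega⟩
      have hv0 := hv ⟨0, by omega⟩
      rw [fderiv_H1_0 n hn c ⟨0, by omega⟩ rfl] at hu0 hv0
      simp only [ContinuousLinearMap.sub_apply, ContinuousLinearMap.add_apply,
        ContinuousLinearMap.smul_apply, ContinuousLinearMap.proj_apply,
        smul_eq_mul, sub_eq_zero] at hu0 hv0
      rw [stdSymp]
      apply Finset.sum_eq_zero
      intro j _
      by_cases hj : j.val = 0
      · have e0 : (⟨2 * j.val, by have := j.isLt; omega⟩ : Fin (2*n))
            = (⟨0, by omega⟩ : Fin (2*n)) := by simp [Fin.ext_iff, hj]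
        have e1 : (⟨2 * j.val + 1, by have := j.isLt; omega⟩ : Fin (2*n))
            = (⟨1, by omega⟩ : Fin (2*n)) := by simp [Fin.ext_iff, hj]
        rw [e0, e1, hu0, hv0]
        ring
      · have huj := hu j
        have hvj := hv j
        rw [fderiv_H1_1 n hn c j hj] at huj hvj
        simp only [ContinuousLinearMap.proj_apply] at huj hvj
        rw [huj, hvj]
        ring

/-- Lagrangian tangency orders for the class `(T₇)⁴`. -/
theorem T7_4_lagrangian_tangency_orders
    (n : ℕ) (hn : 2 ≤ n) (c : ℝ)
    (B₁ B₂ : ℝ → Fin (2 * n) → ℝ)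
    (hB₁ : B₁ = fun (t : ℝ) (j : Fin (2 * n)) => if (j : ℕ) = 0 then t ^ 3 else if (j : ℕ) = 1 then (c / 3) * t ^ 6 else if (j : ℕ) = 3 then -t ^ 2 else (0 : ℝ))
    (hB₂ : B₂ = fun (t : ℝ) (j : Fin (2 * n)) => if (j : ℕ) = 0 then t ^ 3 else if (j : ℕ) = 2 then -t ^ 2 else (0 : ℝ)) :
    Lt2 B₁ B₂ = 2 ∧ Lt1 B₁ = ⊤ ∧ Lt1 B₂ = ⊤ := by
  have h2n : 0 < 2 * n := by omega
  set e0 : Fin (2 * n) → ℝ := Pi.single ⟨0, by omega⟩ 1 with he0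
  set e1 : Fin (2 * n) → ℝ := Pi.single ⟨1, by omega⟩ 1 with he1
  set e2 : Fin (2 * n) → ℝ := Pi.single ⟨2, by omega⟩ 1 with he2
  set e3 : Fin (2 * n) → ℝ := Pi.single ⟨3, by omega⟩ 1 with he3
  -- the two curves in "curve form"
  have hc1 : B₁ = fun t : ℝ => t ^ 3 • e0 + ((c/3) * t ^ 6) • e1 + (-(t ^ 2)) • e3 := by
    rw [hB₁]; funext t j
    simp only [Pi.add_apply, Pi.smul_apply, smul_eq_mul, he0, he1, he3, Pi.single_apply,
      Fin.ext_iff]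
    by_cases h0 : (j : ℕ) = 0 <;> by_cases h1 : (j : ℕ) = 1 <;> by_cases h3 : (j : ℕ) = 3 <;>
      simp [h0, h1, h3]
  have hc2 : B₂ = fun t : ℝ => t ^ 3 • e0 + ((0:ℝ) * t ^ 6) • e1 + (-(t ^ 2)) • e2 := by
    rw [hB₂]; funext t j
    simp only [Pi.add_apply, Pi.smul_apply, smul_eq_mul, he0, he1, he2, Pi.single_apply,
      Fin.ext_iff]
    by_cases h0 : (j : ℕ) = 0 <;> by_cases h1 : (j : ℕ) = 1 <;> by_cases h2 : (j : ℕ) = 2 <;>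
      simp [h0, h1, h2]
  -- stdSymp of e2 and e3 is 1
  have hsymp : stdSymp n e2 e3 = 1 := by
    rw [stdSymp, Finset.sum_eq_single_of_mem (⟨1, by omega⟩ : Fin n) (Finset.mem_univ _)]
    · norm_num [he2, he3, Pi.single_apply, Fin.mk.injEq]
    · intro b _ hb
      have hbv : b.val ≠ 1 := fun hc => hb (Fin.ext hc)
      simp only [he2, he3, Pi.single_apply, Fin.mk.injEq]
      rw [if_neg (show ¬ 2 * b.val = 2 by omega), if_neg (show ¬ 2 * b.val = 3 by omega)]
      ring
  -- upper bound for the multi-germ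
  have upper : ∀ L : LagrangianGerm n, min (tOrd B₁ L) (tOrd B₂ L) ≤ 2 := by
    intro L
    by_contra hlt
    push_neg at hlt
    rw [lt_min_iff] at hlt
    obtain ⟨hlt1, hlt2⟩ := hlt
    have key3 : ∀ i, fderiv ℝ (L.H i) 0 e3 = 0 := by
      intro i
      have hv : 2 < vanishOrder (fun t => L.H i (B₁ t)) :=
        lt_of_lt_of_le hlt1 (iInf_le _ i)
      have hz := iteratedDeriv2_eq_zero _ hv
      rw [hc1] at hz
      have hk := key_second_deriv (L.H i) (L.smooth i) (c/3) e0 e1 e3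
      rw [show (fun t : ℝ => L.H i ((fun t : ℝ =>
          t ^ 3 • e0 + ((c/3) * t ^ 6) • e1 + (-(t ^ 2)) • e3) t))
        = (fun t : ℝ => L.H i (t ^ 3 • e0 + ((c/3) * t ^ 6) • e1 + (-(t ^ 2)) • e3))
        from rfl, hk] at hz
      linarith
    have key2 : ∀ i, fderiv ℝ (L.H i) 0 e2 = 0 := by
      intro i
      have hv : 2 < vanishOrder (fun t => L.H i (B₂ t)) :=
        lt_of_lt_of_le hlt2 (iInf_le _ i)
      have hz := iteratedDeriv2_eq_zero _ hv
      rw [hc2] at hz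
      have hk := key_second_deriv (L.H i) (L.smooth i) 0 e0 e1 e2
      rw [show (fun t : ℝ => L.H i ((fun t : ℝ =>
          t ^ 3 • e0 + ((0:ℝ) * t ^ 6) • e1 + (-(t ^ 2)) • e2) t))
        = (fun t : ℝ => L.H i (t ^ 3 • e0 + ((0:ℝ) * t ^ 6) • e1 + (-(t ^ 2)) • e2))
        from rfl, hk] at hz
      linarith
    obtain ⟨U, hUopen, hU0, hL⟩ := L.lagrangian
    obtain ⟨-, hω⟩ := hL 0 hU0 (fun i => L.zero_at_zero i)
    have h0 := hω e2 e3 key2 key3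
    rw [hsymp] at h0
    norm_num at h0
  -- tangency order of B₂ with Lgerm2 is ⊤
  have htop2 : tOrd B₂ (Lgerm2 n hn) = ⊤ := by
    apply top_unique
    apply le_iInf
    intro i
    have hfun : (fun t => (Lgerm2 n hn).H i (B₂ t)) = fun _ => 0 := by
      funext t
      rw [hB₂]
      show (if ((sig n hn i : Fin (2*n)) : ℕ) = 0 then t ^ 3
        else if ((sig n hn i : Fin (2*n)) : ℕ) = 2 then -t ^ 2 else (0:ℝ)) = 0
      have hs : ((sig n hn i : Fin (2*n)) : ℕ)
          = if i.val = 0 then 1 else if i.val = 1 then 3 else 2 * i.val := rfl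
      rw [hs]
      by_cases hi0 : i.val = 0
      · rw [if_pos hi0]; norm_num
      · by_cases hi1 : i.val = 1
        · rw [if_neg hi0, if_pos hi1]; norm_num
        · rw [if_neg hi0, if_neg hi1,
            if_neg (show ¬ 2 * i.val = 0 by omega),
            if_neg (show ¬ 2 * i.val = 2 by omega)]
    rw [hfun, vanishOrder_zero_fun]
  -- tangency order of B₁ with Lgerm2 is at least 2
  have hge2 : (2 : ℕ∞) ≤ tOrd B₁ (Lgerm2 n hn) := by
    apply le_iInf
    intro i
    have hs : ((sig n hn i : Fin (2*n)) : ℕ)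
        = if i.val = 0 then 1 else if i.val = 1 then 3 else 2 * i.val := rfl
    rcases Nat.lt_or_ge i.val 1 with hi | hi
    · -- i = 0 : coordinate 1, giving (c/3) t^6
      have hfun : (fun t => (Lgerm2 n hn).H i (B₁ t)) = fun t => (c/3) * t^6 := by
        funext t
        rw [hB₁]
        show (if ((sig n hn i : Fin (2*n)) : ℕ) = 0 then t ^ 3
          else if ((sig n hn i : Fin (2*n)) : ℕ) = 1 then (c/3) * t ^ 6
          else if ((sig n hn i : Fin (2*n)) : ℕ) = 3 then -t ^ 2 else (0:ℝ)) = (c/3) * t^6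
        rw [hs, if_pos (show i.val = 0 by omega)]
        norm_num
      rw [hfun]
      apply two_le_vanishOrder
      have := ((hasDerivAt_pow 6 (0:ℝ)).const_mul (c/3)).deriv
      rw [this]; norm_num
    rcases Nat.lt_or_ge i.val 2 with hi2 | hi2
    · -- i = 1 : coordinate 3, giving -t^2
      have hfun : (fun t => (Lgerm2 n hn).H i (B₁ t)) = fun t => -t^2 := by
        funext t
        rw [hB₁]
        show (if ((sig n hn i : Fin (2*n)) : ℕ) = 0 then t ^ 3
          else if ((sig n hn i : Fin (2*n)) : ℕ) = 1 then (c/3) * t ^ 6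
          else if ((sig n hn i : Fin (2*n)) : ℕ) = 3 then -t ^ 2 else (0:ℝ)) = -t^2
        rw [hs, if_neg (show ¬ i.val = 0 by omega), if_pos (show i.val = 1 by omega)]
        norm_num
      rw [hfun]
      apply two_le_vanishOrder
      have : deriv (fun t : ℝ => -t^2) 0 = -((2:ℕ) * (0:ℝ) ^ (2-1)) :=
        ((hasDerivAt_pow 2 (0:ℝ)).neg).deriv
      rw [this]; norm_num
    · -- i ≥ 2 : coordinate 2i, giving 0
      have hfun : (fun t => (Lgerm2 n hn).H i (B₁ t)) = fun _ => 0 := by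
        funext t
        rw [hB₁]
        show (if ((sig n hn i : Fin (2*n)) : ℕ) = 0 then t ^ 3
          else if ((sig n hn i : Fin (2*n)) : ℕ) = 1 then (c/3) * t ^ 6
          else if ((sig n hn i : Fin (2*n)) : ℕ) = 3 then -t ^ 2 else (0:ℝ)) = 0
        rw [hs, if_neg (show ¬ i.val = 0 by omega), if_neg (show ¬ i.val = 1 by omega),
          if_neg (show ¬ 2 * i.val = 0 by omega),
          if_neg (show ¬ 2 * i.val = 1 by omega),
          if_neg (show ¬ 2 * i.val = 3 by omega)]
      rw [hfun, vanishOrder_zero_fun]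
      exact le_top
  -- tangency order of B₁ with Lgerm1 is ⊤
  have htop1 : tOrd B₁ (Lgerm1 n hn c) = ⊤ := by
    apply top_unique
    apply le_iInf
    intro i
    by_cases hi : i.val = 0
    · have hfun : (fun t => (Lgerm1 n hn c).H i (B₁ t)) = fun _ => 0 := by
        funext t
        show H1 n hn c i (B₁ t) = 0
        rw [H1_eq0 n hn c i hi, hB₁]
        norm_num
        ring
      rw [hfun, vanishOrder_zero_fun]
    · have hfun : (fun t => (Lgerm1 n hn c).H i (B₁ t)) = fun _ => 0 := by
        funext t
        show H1 n hn c i (B₁ t) = 0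
        rw [H1_eq1 n hn c i hi, hB₁]
        show (if (2 * i.val : ℕ) = 0 then t ^ 3
          else if (2 * i.val : ℕ) = 1 then (c/3) * t ^ 6
          else if (2 * i.val : ℕ) = 3 then -t ^ 2 else (0:ℝ)) = 0
        rw [if_neg (show ¬ 2 * i.val = 0 by omega),
          if_neg (show ¬ 2 * i.val = 1 by omega),
          if_neg (show ¬ 2 * i.val = 3 by omega)]
      rw [hfun, vanishOrder_zero_fun]
  refine ⟨?_, ?_, ?_⟩
  · -- Lt2 = 2
    rw [Lt2]
    apply le_antisymm
    · exact iSup_le upper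
    · exact le_iSup_of_le (Lgerm2 n hn) (le_min hge2 (htop2 ▸ le_top))
  · -- Lt1 B₁ = ⊤
    rw [Lt1]
    exact top_unique (le_iSup_of_le (Lgerm1 n hn c) (htop1 ▸ le_refl _))
  · -- Lt1 B₂ = ⊤
    rw [Lt1]
    exact top_unique (le_iSup_of_le (Lgerm2 n hn) (htop2 ▸ le_refl _))

end
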